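/- arXiv:cs/0207026 — 2 statements merged into one kernel-verified Lean document; each statement's English description precedes it below -/
import Mathlib

section
/- Let A be a sequence of pairs (a_k, w_k) with w_k > 0 for k = 1,…,n. Every nonempty segment A(x,y) has a unique decreasingly right-skew partition: a partition into consecutive segments A_1 A_2 ⋯ A_m such that each A_t is right-skew and μ(A_1) > μ(A_2) > ⋯ > μ(A_m). -/
noncomputable def density (a w : ℕ → ℝ) (i j : ℕ) : ℝ :=
  (∑ t ∈ Finset.Icc i j, a t) / (∑ t ∈ Finset.Icc i j, w t)

def RightSkew (a w : ℕ → ℝ) (i k : ℕ) : Prop :=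
  ∀ j, i ≤ j → j < k → density a w i j ≤ density a w (j + 1) k

/-- `segs` is a decreasingly right-skew partition of the segment `A(x,y)`. -/
def IsDRSP (a w : ℕ → ℝ) (x y : ℕ) (segs : List (ℕ × ℕ)) : Prop :=
  segs ≠ [] ∧
  segs.head?.map Prod.fst = some x ∧
  segs.getLast?.map Prod.snd = some y ∧
  (∀ s ∈ segs, s.1 ≤ s.2 ∧ RightSkew a w s.1 s.2) ∧
  segs.Chain' (fun s t => t.1 = s.2 + 1 ∧ density a w t.1 t.2 < density a w s.1 s.2)

/-! ### Mediant arithmetic -/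

private lemma medL {s1 s2 w1 w2 : ℝ} (hw1 : 0 < w1) (hw2 : 0 < w2) :
    s1 / w1 ≤ s2 / w2 ↔ s1 / w1 ≤ (s1 + s2) / (w1 + w2) := by
  rw [div_le_div_iff₀ hw1 hw2, div_le_div_iff₀ hw1 (by linarith)]
  constructor <;> intro h <;> nlinarith

private lemma medR {s1 s2 w1 w2 : ℝ} (hw1 : 0 < w1) (hw2 : 0 < w2) :
    s1 / w1 ≤ s2 / w2 ↔ (s1 + s2) / (w1 + w2) ≤ s2 / w2 := by
  rw [div_le_div_iff₀ hw1 hw2, div_le_div_iff₀ (by linarith) hw2]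
  constructor <;> intro h <;> nlinarith

private lemma med_le {s1 s2 w1 w2 c : ℝ} (hw1 : 0 < w1) (hw2 : 0 < w2)
    (h1 : s1 / w1 ≤ c) (h2 : s2 / w2 ≤ c) : (s1 + s2) / (w1 + w2) ≤ c := by
  rw [div_le_iff₀ hw1] at h1
  rw [div_le_iff₀ hw2] at h2
  rw [div_le_iff₀ (by linarith)]
  nlinarith

private lemma med_lt {s1 s2 w1 w2 c : ℝ} (hw1 : 0 < w1) (hw2 : 0 < w2)
    (h1 : s1 / w1 < c) (h2 : s2 / w2 < c) : (s1 + s2) / (w1 + w2) < c := by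
  rw [div_lt_iff₀ hw1] at h1
  rw [div_lt_iff₀ hw2] at h2
  rw [div_lt_iff₀ (by linarith)]
  nlinarith

private lemma le_med {s1 s2 w1 w2 c : ℝ} (hw1 : 0 < w1) (hw2 : 0 < w2)
    (h1 : c ≤ s1 / w1) (h2 : c ≤ s2 / w2) : c ≤ (s1 + s2) / (w1 + w2) := by
  rw [le_div_iff₀ hw1] at h1
  rw [le_div_iff₀ hw2] at h2
  rw [le_div_iff₀ (by linarith)]
  nlinarith

/-! ### Density splitting lemmas -/

lemma sum_split (f : ℕ → ℝ) {i j k : ℕ} (h1 : i ≤ j) (h2 : j < k) :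
    ∑ t ∈ Finset.Icc i k, f t
      = (∑ t ∈ Finset.Icc i j, f t) + ∑ t ∈ Finset.Icc (j+1) k, f t := by
  rw [← Finset.Ico_add_one_right_eq_Icc, ← Finset.Ico_add_one_right_eq_Icc, ← Finset.Ico_add_one_right_eq_Icc]
  exact (Finset.sum_Ico_consecutive f (by omega) (by omega)).symm

lemma Wpos (w : ℕ → ℝ) (hw : ∀ t, 0 < w t) {i j : ℕ} (h : i ≤ j) :
    0 < ∑ t ∈ Finset.Icc i j, w t :=
  Finset.sum_pos (fun t _ => hw t) (Finset.nonempty_Icc.2 h)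

lemma D1 (a w : ℕ → ℝ) (hw : ∀ t, 0 < w t) {i j k : ℕ} (h1 : i ≤ j) (h2 : j < k) :
    (density a w i j ≤ density a w (j+1) k) ↔ density a w i j ≤ density a w i k := by
  unfold density
  rw [sum_split a h1 h2, sum_split w h1 h2]
  exact medL (Wpos w hw h1) (Wpos w hw (by omega))

lemma D2 (a w : ℕ → ℝ) (hw : ∀ t, 0 < w t) {i j k : ℕ} (h1 : i ≤ j) (h2 : j < k) :
    (density a w i j ≤ density a w (j+1) k) ↔ density a w i k ≤ density a w (j+1) k := by
  unfold density
  rw [sum_split a h1 h2, sum_split w h1 h2]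
  exact medR (Wpos w hw h1) (Wpos w hw (by omega))

lemma D3 (a w : ℕ → ℝ) (hw : ∀ t, 0 < w t) {i j k : ℕ} {c : ℝ} (h1 : i ≤ j) (h2 : j < k)
    (ha : density a w i j ≤ c) (hb : density a w (j+1) k ≤ c) : density a w i k ≤ c := by
  unfold density at *
  rw [sum_split a h1 h2, sum_split w h1 h2]
  exact med_le (Wpos w hw h1) (Wpos w hw (by omega)) ha hb

lemma D3s (a w : ℕ → ℝ) (hw : ∀ t, 0 < w t) {i j k : ℕ} {c : ℝ} (h1 : i ≤ j) (h2 : j < k)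
    (ha : density a w i j < c) (hb : density a w (j+1) k < c) : density a w i k < c := by
  unfold density at *
  rw [sum_split a h1 h2, sum_split w h1 h2]
  exact med_lt (Wpos w hw h1) (Wpos w hw (by omega)) ha hb

lemma D4 (a w : ℕ → ℝ) (hw : ∀ t, 0 < w t) {i j k : ℕ} {c : ℝ} (h1 : i ≤ j) (h2 : j < k)
    (ha : c ≤ density a w i j) (hb : c ≤ density a w (j+1) k) : c ≤ density a w i k := by
  unfold density at *
  rw [sum_split a h1 h2, sum_split w h1 h2]
  exact le_med (Wpos w hw h1) (Wpos w hw (by omega)) ha hb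

lemma D5 (a w : ℕ → ℝ) (hw : ∀ t, 0 < w t) {i j k : ℕ} (h1 : i ≤ j) (h2 : j < k) :
    (density a w (j+1) k < density a w i j) ↔ density a w i k < density a w i j := by
  rw [lt_iff_not_ge, lt_iff_not_ge]
  exact not_congr (D1 a w hw h1 h2)

/-! ### Right-skew lemmas -/

lemma rs_single (a w : ℕ → ℝ) (x : ℕ) : RightSkew a w x x :=
  fun _ h1 h2 => absurd (h1.trans_lt h2) (lt_irrefl x)

lemma prefix_le (a w : ℕ → ℝ) (hw : ∀ t, 0 < w t) {i j k : ℕ}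
    (hrs : RightSkew a w i k) (h1 : i ≤ j) (h2 : j ≤ k) :
    density a w i j ≤ density a w i k := by
  rcases eq_or_lt_of_le h2 with rfl | h
  · exact le_refl _
  · exact (D1 a w hw h1 h).1 (hrs j h1 h)

lemma rs_merge (a w : ℕ → ℝ) (hw : ∀ t, 0 < w t) {i j k : ℕ} (h1 : i ≤ j) (h2 : j < k)
    (r1 : RightSkew a w i j) (r2 : RightSkew a w (j+1) k)
    (hd : density a w i j ≤ density a w (j+1) k) : RightSkew a w i k := by
  intro j' hij' hj'k
  rcases lt_trichotomy j' j with h | rfl | h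
  · have ha := r1 j' hij' h
    have hb : density a w i j' ≤ density a w i j := (D1 a w hw hij' h).1 ha
    exact D4 a w hw (by omega) h2 ha (hb.trans hd)
  · exact hd
  · have hc := r2 j' (by omega) hj'k
    have ha : density a w (j+1) k ≤ density a w (j'+1) k := (D2 a w hw (by omega) hj'k).1 hc
    exact D3 a w hw h1 h (hd.trans ha) hc

/-! ### DRSP structural lemmas -/

lemma tail_drsp (a w : ℕ → ℝ) {x y : ℕ} {s : ℕ × ℕ} {t : List (ℕ × ℕ)}
    (hd : IsDRSP a w x y (s :: t)) (ht : t ≠ []) : IsDRSP a w (s.2 + 1) y t := by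
  obtain ⟨-, h2, h3, h4, h5⟩ := hd
  obtain ⟨u, t', rfl⟩ := List.exists_cons_of_ne_nil ht
  obtain ⟨hrel, hch⟩ := List.isChain_cons_cons.1 h5
  exact ⟨by simp, by simp [hrel.1], by simpa using h3,
    fun z hz => h4 z (List.mem_cons_of_mem _ hz), hch⟩

lemma drsp_le (a w : ℕ → ℝ) :
    ∀ (segs : List (ℕ × ℕ)) (x y : ℕ), IsDRSP a w x y segs → x ≤ y := by
  intro segs
  induction segs with
  | nil => intro x y h; exact absurd rfl h.1
  | cons s t ih =>
    intro x y h
    have hs1 : s.1 = x := by simpa using h.2.1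
    have hle : s.1 ≤ s.2 := (h.2.2.2.1 s (List.mem_cons_self)).1
    by_cases ht : t = []
    · subst ht
      have : s.2 = y := by simpa using h.2.2.1
      omega
    · have h2 := ih (s.2 + 1) y (tail_drsp a w h ht)
      omega

lemma head_snd_le (a w : ℕ → ℝ) {x y : ℕ} {s : ℕ × ℕ} {t : List (ℕ × ℕ)}
    (h : IsDRSP a w x y (s :: t)) : s.2 ≤ y := by
  by_cases ht : t = []
  · subst ht
    have : s.2 = y := by simpa using h.2.2.1
    omega
  · have := drsp_le a w t (s.2 + 1) y (tail_drsp a w h ht)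
    omega

lemma chain_bound (a w : ℕ → ℝ) (hw : ∀ t, 0 < w t) :
    ∀ (t : List (ℕ × ℕ)) (x p y : ℕ), IsDRSP a w x y ((x, p) :: t) →
    ∀ j, p < j → j ≤ y → density a w (p+1) j < density a w x p := by
  intro t
  induction t with
  | nil =>
    intro x p y h j h1 h2
    have : p = y := by simpa using h.2.2.1
    omega
  | cons s t' ih =>
    intro x p y h j h1 h2
    obtain ⟨s1, s2⟩ := s
    obtain ⟨hrel, -⟩ := List.isChain_cons_cons.1 h.2.2.2.2
    have hs1 : s1 = p + 1 := hrel.1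
    subst hs1
    have hlt : density a w (p+1) s2 < density a w x p := hrel.2
    have htail : IsDRSP a w (p+1) y ((p+1, s2) :: t') := tail_drsp a w h (by simp)
    have hle : p + 1 ≤ s2 := (htail.2.2.2.1 _ (List.mem_cons_self)).1
    have hrs : RightSkew a w (p+1) s2 := (htail.2.2.2.1 _ (List.mem_cons_self)).2
    rcases le_or_gt j s2 with hj | hj
    · exact lt_of_le_of_lt (prefix_le a w hw hrs (by omega) hj) hlt
    · have h1' := ih (p+1) s2 y htail j hj h2
      exact D3s a w hw hle hj hlt (h1'.trans hlt)

lemma first_max (a w : ℕ → ℝ) (hw : ∀ t, 0 < w t) {t : List (ℕ × ℕ)} {x p y : ℕ}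
    (h : IsDRSP a w x y ((x, p) :: t)) :
    ∀ j, p < j → j ≤ y → density a w x j < density a w x p := by
  intro j h1 h2
  have hxp : x ≤ p := (h.2.2.2.1 _ (List.mem_cons_self)).1
  have hb := chain_bound a w hw t x p y h j h1 h2
  exact (D5 a w hw hxp h1).1 hb

/-! ### Existence -/

lemma extend (a w : ℕ → ℝ) (hw : ∀ t, 0 < w t) :
    ∀ (segs : List (ℕ × ℕ)) (x q y : ℕ), x ≤ q → RightSkew a w x q →
    IsDRSP a w (q+1) y segs → ∃ s', IsDRSP a w x y s' := by
  intro segs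
  induction segs with
  | nil => intro x q y _ _ h; exact absurd rfl h.1
  | cons s t ih =>
    intro x q y hxq hrs h
    have hs1 : s.1 = q + 1 := by simpa using h.2.1
    have hsle : s.1 ≤ s.2 := (h.2.2.2.1 s (List.mem_cons_self)).1
    have hrs2 : RightSkew a w (q+1) s.2 := hs1 ▸ (h.2.2.2.1 s (List.mem_cons_self)).2
    rcases lt_or_ge (density a w s.1 s.2) (density a w x q) with hlt | hle
    · refine ⟨(x, q) :: s :: t, by simp, by simp, by simpa using h.2.2.1, ?_, ?_⟩
      · intro z hz
        rcases List.mem_cons.1 hz with rfl | hz'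
        · exact ⟨hxq, hrs⟩
        · exact h.2.2.2.1 z hz'
      · exact List.isChain_cons_cons.2 ⟨⟨hs1, hlt⟩, h.2.2.2.2⟩
    · have hq2 : q < s.2 := by omega
      have hle' : density a w x q ≤ density a w (q+1) s.2 := by rwa [hs1] at hle
      have hmerge : RightSkew a w x s.2 := rs_merge a w hw hxq hq2 hrs hrs2 hle'
      by_cases ht : t = []
      · subst ht
        have hsy : s.2 = y := by simpa using h.2.2.1
        refine ⟨[(x, s.2)], by simp, by simp, by simp [hsy], ?_, List.isChain_singleton _⟩
        intro z hz
        simp only [List.mem_singleton] at hz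
        subst hz
        exact ⟨by omega, hmerge⟩
      · exact ih x s.2 y (by omega) hmerge (tail_drsp a w h ht)

lemma drsp_exists (a w : ℕ → ℝ) (hw : ∀ t, 0 < w t) :
    ∀ (d x y : ℕ), y = x + d → ∃ segs, IsDRSP a w x y segs := by
  intro d
  induction d with
  | zero =>
    intro x y hxy
    have : y = x := by omega
    subst this
    refine ⟨[(y, y)], by simp, by simp, by simp, ?_, List.isChain_singleton _⟩
    intro z hz
    simp only [List.mem_singleton] at hz
    subst hz
    exact ⟨le_refl _, rs_single a w y⟩
  | succ n ih =>
    intro x y hxy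
    obtain ⟨segs, hsegs⟩ := ih (x+1) y (by omega)
    exact extend a w hw segs x x y le_rfl (rs_single a w x) hsegs

/-! ### Uniqueness -/

lemma drsp_unique (a w : ℕ → ℝ) (hw : ∀ t, 0 < w t) :
    ∀ (s1 : List (ℕ × ℕ)) (x y : ℕ) (s2 : List (ℕ × ℕ)),
    IsDRSP a w x y s1 → IsDRSP a w x y s2 → s1 = s2 := by
  intro s1
  induction s1 with
  | nil => intro x y s2 h _; exact absurd rfl h.1
  | cons s t ih =>
    intro x y s2 h1 h2
    obtain ⟨u, v, rfl⟩ := List.exists_cons_of_ne_nil h2.1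
    obtain ⟨sa, sb⟩ := s
    obtain ⟨ua, ub⟩ := u
    have hsa : sa = x := by simpa using h1.2.1
    have hua : ua = x := by simpa using h2.2.1
    rw [hsa] at h1
    rw [hua] at h2
    have hxs : x ≤ sb := (h1.2.2.2.1 _ (List.mem_cons_self)).1
    have hxu : x ≤ ub := (h2.2.2.2.1 _ (List.mem_cons_self)).1
    have hrs1 : RightSkew a w x sb := (h1.2.2.2.1 _ (List.mem_cons_self)).2
    have hrs2 : RightSkew a w x ub := (h2.2.2.2.1 _ (List.mem_cons_self)).2
    have hsy : sb ≤ y := head_snd_le a w h1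
    have huy : ub ≤ y := head_snd_le a w h2
    have heq : sb = ub := by
      by_contra hne
      rcases lt_or_gt_of_ne hne with hlt | hgt
      · have hA := first_max a w hw h1 ub hlt huy
        have hB := prefix_le a w hw hrs2 hxs (le_of_lt hlt)
        linarith
      · have hA := first_max a w hw h2 sb hgt hsy
        have hB := prefix_le a w hw hrs1 hxu (le_of_lt hgt)
        linarith
    subst heq
    rw [hsa, hua]
    congr 1
    by_cases ht : t = []
    · subst ht
      have hy : sb = y := by simpa using h1.2.2.1
      by_contra hv
      have hv' : v ≠ [] := fun hh => hv hh.symm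
      have := drsp_le a w v (sb + 1) y (tail_drsp a w h2 hv')
      omega
    · have hv : v ≠ [] := by
        intro hv; subst hv
        have hy : sb = y := by simpa using h2.2.2.1
        have := drsp_le a w t (sb + 1) y (tail_drsp a w h1 ht)
        omega
      exact ih (sb + 1) y v (tail_drsp a w h1 ht) (tail_drsp a w h2 hv)

theorem drsp_exists_unique (a w : ℕ → ℝ) (hw : ∀ t, 0 < w t)
    (x y : ℕ) (hxy : x ≤ y) :
    ∃! segs : List (ℕ × ℕ), IsDRSP a w x y segs := by
  obtain ⟨segs, hsegs⟩ := drsp_exists a w hw (y - x) x y (by omega)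
  exact ⟨segs, hsegs, fun s' h' => drsp_unique a w hw s' x y segs h' hsegs⟩
end

section
/- Let A be a sequence of pairs (a_k, w_k) with w_k > 0, and consider two segments A(x_1, y) and A(x_2, y) sharing a right endpoint y. Let A(k, k') be a block of the decreasingly right-skew partition of A(x_1, y) and A(m, m') a block of the decreasingly right-skew partition of A(x_2, y). Then it cannot hold that k < m ≤ k' < m'. -/
section Aux

variable (a w : ℕ → ℝ)

lemma sum_Icc_split (f : ℕ → ℝ) (i j k : ℕ) (h1 : i ≤ j) (h2 : j < k) :
    ∑ t ∈ Finset.Icc i k, f t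
      = (∑ t ∈ Finset.Icc i j, f t) + ∑ t ∈ Finset.Icc (j+1) k, f t := by
  rw [show Finset.Icc i k = Finset.Icc i j ∪ Finset.Icc (j+1) k by
      ext t; simp only [Finset.mem_union, Finset.mem_Icc]; omega,
    Finset.sum_union (by simp only [Finset.disjoint_left, Finset.mem_Icc]; omega)]

lemma W_pos (hw : ∀ t, 0 < w t) (i j : ℕ) (h : i ≤ j) :
    0 < ∑ t ∈ Finset.Icc i j, w t :=
  Finset.sum_pos (fun t _ => hw t) (Finset.nonempty_Icc.mpr h)

lemma density_left_le (hw : ∀ t, 0 < w t) {i j k : ℕ} (h1 : i ≤ j) (h2 : j < k)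
    (hle : density a w i j ≤ density a w (j+1) k) :
    density a w i j ≤ density a w i k := by
  have hW1 := W_pos w hw i j h1
  have hW2 := W_pos w hw (j+1) k h2
  unfold density at *
  rw [sum_Icc_split a i j k h1 h2, sum_Icc_split w i j k h1 h2]
  rw [div_le_div_iff₀ hW1 hW2] at hle
  rw [div_le_div_iff₀ hW1 (by linarith)]
  nlinarith

lemma density_le_right (hw : ∀ t, 0 < w t) {i j k : ℕ} (h1 : i ≤ j) (h2 : j < k)
    (hle : density a w i j ≤ density a w (j+1) k) :
    density a w i k ≤ density a w (j+1) k := by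
  have hW1 := W_pos w hw i j h1
  have hW2 := W_pos w hw (j+1) k h2
  unfold density at *
  rw [sum_Icc_split a i j k h1 h2, sum_Icc_split w i j k h1 h2]
  rw [div_le_div_iff₀ hW1 hW2] at hle
  rw [div_le_div_iff₀ (by linarith) hW2]
  nlinarith

lemma density_lt_of_parts (hw : ∀ t, 0 < w t) {i j k : ℕ} {d : ℝ} (h1 : i ≤ j) (h2 : j < k)
    (ha : density a w i j < d) (hb : density a w (j+1) k < d) :
    density a w i k < d := by
  have hW1 := W_pos w hw i j h1
  have hW2 := W_pos w hw (j+1) k h2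
  unfold density at *
  rw [sum_Icc_split a i j k h1 h2, sum_Icc_split w i j k h1 h2]
  rw [div_lt_iff₀ hW1] at ha
  rw [div_lt_iff₀ hW2] at hb
  rw [div_lt_iff₀ (by linarith)]
  nlinarith

lemma rightSkew_prefix_le (hw : ∀ t, 0 < w t) {i j k : ℕ} (hs : RightSkew a w i k)
    (h1 : i ≤ j) (h2 : j ≤ k) :
    density a w i j ≤ density a w i k := by
  rcases eq_or_lt_of_le h2 with rfl | h2
  · exact le_refl _
  · exact density_left_le a w hw h1 h2 (hs j h1 h2)

/-- covering lemma: the density of an interval covered by a prefix of a chain of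
right-skew blocks all of density `< d`, possibly ending inside a block, is `< d`. -/
lemma cover_lt (hw : ∀ t, 0 < w t) (d : ℝ) (y : ℕ) :
    ∀ (L : List (ℕ × ℕ)) (s m' : ℕ),
    L.Chain' (fun s t => t.1 = s.2 + 1 ∧ density a w t.1 t.2 < density a w s.1 s.2) →
    (∀ p ∈ L, p.1 ≤ p.2 ∧ RightSkew a w p.1 p.2) →
    (∀ p ∈ L, density a w p.1 p.2 < d) →
    L.getLast?.map Prod.snd = some y →
    L.head?.map Prod.fst = some s → s ≤ m' → m' ≤ y →
    density a w s m' < d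
  | [], s, m' => by intro _ _ _ _ h; simp at h
  | p :: rest, s, m' => by
    intro hchain hrs hlt hlast hhead hsm hmy
    have hs : s = p.1 := by simp at hhead; omega
    subst hs
    by_cases hcase : m' ≤ p.2
    · calc density a w p.1 m' ≤ density a w p.1 p.2 :=
            rightSkew_prefix_le a w hw (hrs p (by simp)).2 hsm hcase
        _ < d := hlt p (by simp)
    · push_neg at hcase
      match rest, hchain, hlast with
      | [], _, hlast => simp at hlast; omega
      | q :: rest', hchain, hlast =>
        have hR : q.1 = p.2 + 1 ∧ _ := (List.isChain_cons_cons.mp hchain).1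
        have hrec : density a w (p.2 + 1) m' < d := by
          refine cover_lt hw d y (q :: rest') (p.2+1) m'
            (List.isChain_cons_cons.mp hchain).2
            (fun x hx => hrs x (List.mem_cons_of_mem _ hx))
            (fun x hx => hlt x (List.mem_cons_of_mem _ hx)) ?_ ?_ (by omega) hmy
          · rw [← hlast]; rw [List.getLast?_cons_cons]
          · simp [hR.1]
        exact density_lt_of_parts a w hw (hrs p (by simp)).1 hcase
          (hlt p (by simp)) hrec

lemma chain_density_lt {b : ℕ × ℕ} :
    ∀ (L : List (ℕ × ℕ)),
    List.Chain (fun s t => t.1 = s.2 + 1 ∧ density a w t.1 t.2 < density a w s.1 s.2) b L →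
    ∀ p ∈ L, density a w p.1 p.2 < density a w b.1 b.2 := by
  intro L
  induction L generalizing b with
  | nil => simp
  | cons c L' ih =>
    intro hchain p hp
    have hc := List.isChain_cons_cons.mp hchain
    rcases List.mem_cons.mp hp with rfl | hp
    · exact hc.1.2
    · exact lt_trans (@ih c hc.2 p hp) hc.1.2

lemma snd_le_last :
    ∀ (L : List (ℕ × ℕ)) (y : ℕ),
    L.Chain' (fun s t => t.1 = s.2 + 1 ∧ density a w t.1 t.2 < density a w s.1 s.2) →
    (∀ p ∈ L, p.1 ≤ p.2) →
    L.getLast?.map Prod.snd = some y →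
    ∀ p ∈ L, p.2 ≤ y
  | [], y => by simp
  | p :: rest, y => by
    intro hchain hle hlast q hq
    match rest, hchain, hlast with
    | [], _, hlast =>
      simp at hlast hq
      simp [hq, hlast]
    | r :: rest', hchain, hlast =>
      have hR : r.1 = p.2 + 1 ∧ _ := (List.isChain_cons_cons.mp hchain).1
      have ih := snd_le_last (r :: rest') y (List.isChain_cons_cons.mp hchain).2
        (fun x hx => hle x (List.mem_cons_of_mem _ hx))
        (by rw [← hlast, List.getLast?_cons_cons])
      rcases List.mem_cons.mp hq with rfl | hq
      · have := ih r (by simp)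
        have := hle r (by simp)
        omega
      · exact ih q hq

lemma getLast?_append_cons {α : Type*} :
    ∀ (l₁ : List α) (b : α) (l₂ : List α),
      (l₁ ++ b :: l₂).getLast? = (b :: l₂).getLast?
  | [], b, l₂ => rfl
  | [a], b, l₂ => by rw [List.cons_append, List.nil_append, List.getLast?_cons_cons]
  | a :: a' :: l₁, b, l₂ => by
      rw [List.cons_append, List.cons_append, List.getLast?_cons_cons,
        ← List.cons_append, getLast?_append_cons (a' :: l₁)]

end Aux

theorem drsp_nest_common_right (a w : ℕ → ℝ) (hw : ∀ t, 0 < w t)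
    (x₁ x₂ y k k' m m' : ℕ)
    (segs₁ segs₂ : List (ℕ × ℕ))
    (h₁ : IsDRSP a w x₁ y segs₁) (h₂ : IsDRSP a w x₂ y segs₂)
    (hk : (k, k') ∈ segs₁) (hm : (m, m') ∈ segs₂) :
    ¬ (k < m ∧ m ≤ k' ∧ k' < m') := by
  rintro ⟨hkm, hmk', hk'm'⟩
  obtain ⟨hne₁, hhead₁, hlast₁, hrs₁, hch₁⟩ := h₁
  obtain ⟨hne₂, hhead₂, hlast₂, hrs₂, hch₂⟩ := h₂
  -- m' ≤ y
  have hm'y : m' ≤ y := snd_le_last a w segs₂ y hch₂ (fun p hp => (hrs₂ p hp).1) hlast₂ (m, m') hm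
  -- RightSkew facts for (m, m')
  have hrsm := hrs₂ (m, m') hm
  -- density k k' ≤ density (k'+1) m'
  have step1 : density a w m k' ≤ density a w (k'+1) m' := hrsm.2 k' hmk' hk'm'
  have step2 : density a w k k' ≤ density a w m k' := by
    have hrsk := hrs₁ (k, k') hk
    have h0 : k ≤ m - 1 := by omega
    have h1 : m - 1 < k' := by omega
    have h2 := density_le_right a w hw h0 h1 (hrsk.2 (m-1) h0 h1)
    rw [show m - 1 + 1 = m by omega] at h2
    exact h2
  have hle : density a w k k' ≤ density a w (k'+1) m' := le_trans step2 step1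
  -- decompose segs₁ around (k,k')
  obtain ⟨l₁, l₂, rfl⟩ := List.append_of_mem hk
  have hsuffix : ((k, k') :: l₂).Chain'
      (fun s t => t.1 = s.2 + 1 ∧ density a w t.1 t.2 < density a w s.1 s.2) :=
    hch₁.suffix ⟨l₁, rfl⟩
  -- l₂ nonempty (else k' = y, contradicting k' < m' ≤ y)
  match l₂, hsuffix, hlast₁ with
  | [], _, hlast₁ =>
    rw [List.getLast?_concat] at hlast₁
    simp at hlast₁
    omega
  | q :: l₂', hsuffix, hlast₁ =>
    have hchain := List.isChain_cons_cons.mp hsuffix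
    have hq1 : q.1 = k' + 1 := hchain.1.1
    have hlast' : ((q :: l₂').getLast?).map Prod.snd = some y := by
      rw [getLast?_append_cons, List.getLast?_cons_cons] at hlast₁
      exact hlast₁
    have hcov : density a w (k'+1) m' < density a w k k' := by
      refine cover_lt a w hw (density a w k k') y (q :: l₂') (k'+1) m' hchain.2
        (fun p hp => hrs₁ p (by simp [hp]))
        ?_ hlast' (by simp [hq1]) (by omega) hm'y
      · intro p hp
        exact chain_density_lt a w (q :: l₂') hsuffix p hp
    linarith
end
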